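/- Let M be a matching in a bipartite graph H = (A ∪ B, E) with strict preference lists, and suppose there is a vector α ∈ R^(A∪B) with Σ_u α_u = 0, α_a + α_b ≥ wt_M(a,b) for every edge (a,b) ∈ E, and α_u ≥ wt_M(u,u) for every vertex u. Then M is popular. -/
import Mathlib


open Finset

section Defs
variable {V : Type*}

/-- A matching given as a partial partner function: if `M u = some v` then
`(u,v)` is an edge and `v`'s partner is `u`. -/
def IsMatching (adj : V → V → Prop) (M : V → Option V) : Prop :=
  ∀ u v, M u = some v → adj u v ∧ M v = some u

/-- Vertex `u` prefers matching `M` to `M'`: matched in `M` and unmatched in `M'`,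
or matched in both and prefers its `M`-partner. -/
def PrefersM (pref : V → V → V → Bool) (M M' : V → Option V) (u : V) : Bool :=
  match M u, M' u with
  | some a, some b => pref u a b
  | some _, none => true
  | _, _ => false

/-- `phiM pref M M'` = number of vertices preferring `M` to `M'`. -/
def phiM [Fintype V] (pref : V → V → V → Bool) (M M' : V → Option V) : ℕ :=
  (Finset.univ.filter fun u => PrefersM pref M M' u = true).card

/-- `M` is popular: no matching is preferred by strictly more vertices. -/
def Popular [Fintype V] (adj : V → V → Prop) (pref : V → V → V → Bool)
    (M : V → Option V) : Prop :=
  ∀ M', IsMatching adj M' → phiM pref M' M ≤ phiM pref M M'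

/-- `a` prefers `b` to its assignment under `M` (being unmatched is worst). -/
def PrefOver (pref : V → V → V → Bool) (M : V → Option V) (a b : V) : Prop :=
  match M a with
  | none => True
  | some c => pref a b c = true

/-- `(a,b)` is a blocking edge with respect to `M`. -/
def Blocking (adj : V → V → Prop) (pref : V → V → V → Bool) (M : V → Option V)
    (a b : V) : Prop :=
  adj a b ∧ PrefOver pref M a b ∧ PrefOver pref M b a

/-- Number of matched vertices (twice the number of edges of `M`). -/
def msize [Fintype V] (M : V → Option V) : ℕ :=
  (Finset.univ.filter fun u => (M u).isSome = true).card

/-- `vote u v v'` where `u` itself encodes "unmatched"; every vertex regards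
itself as strictly worse than any neighbor. -/
def vote [DecidableEq V] (pref : V → V → V → Bool) (u v v' : V) : ℤ :=
  if v = v' then 0
  else if v' = u then 1
  else if v = u then -1
  else if pref u v v' then 1 else -1

/-- `wt_M(a,b) = vote_a(b, M̃(a)) + vote_b(a, M̃(b))`. -/
def wtEdge [DecidableEq V] (pref : V → V → V → Bool) (M : V → Option V) (a b : V) : ℤ :=
  vote pref a b ((M a).getD a) + vote pref b a ((M b).getD b)

/-- `wt_M(u,u)`: 0 if `u` is unmatched in `M`, else −1. -/
def wtSelf (M : V → Option V) (u : V) : ℤ :=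
  if (M u).isSome then -1 else 0

end Defs

/-- If a matching `M` in a bipartite instance admits a witness `α ∈ ℝ^(A∪B)`
(`∑ α = 0`, edge constraints, self-loop constraints), then `M` is popular. -/
theorem witness_implies_popular {V : Type*} [Fintype V] [DecidableEq V]
    (adj : V → V → Prop) (hsymm : ∀ u v, adj u v → adj v u) (hadjirr : ∀ u, ¬ adj u u)
    (side : V → Bool) (hbip : ∀ u v, adj u v → side u ≠ side v)
    (pref : V → V → V → Bool)
    (hpirr : ∀ u a, pref u a a = false)
    (hasym : ∀ u a b, pref u a b = true → pref u b a = false)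
    (htrans : ∀ u a b c, pref u a b = true → pref u b c = true → pref u a c = true)
    (htot : ∀ u a b, adj u a → adj u b → a ≠ b → pref u a b = true ∨ pref u b a = true)
    (M : V → Option V) (hM : IsMatching adj M)
    (α : V → ℝ) (hsum : ∑ u : V, α u = 0)
    (hedge : ∀ a b, adj a b → α a + α b ≥ ((wtEdge pref M a b : ℤ) : ℝ))
    (hself : ∀ u, α u ≥ ((wtSelf M u : ℤ) : ℝ)) :
    Popular adj pref M := by
  intro N hN
  -- partner functions with self-loops
  set Mt : V → V := fun u => (M u).getD u with hMt
  set Nt : V → V := fun u => (N u).getD u with hNtdef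
  have hMne : ∀ u v, M u = some v → v ≠ u := by
    intro u v h heq; exact hadjirr u (heq ▸ (hM u v h).1)
  have hNne : ∀ u v, N u = some v → v ≠ u := by
    intro u v h heq; exact hadjirr u (heq ▸ (hN u v h).1)
  have hNinv : Function.Involutive Nt := by
    intro u
    rcases h : N u with _ | v
    · simp [hNtdef, h]
    · have h2 := (hN u v h).2
      simp [hNtdef, h, h2]
  -- per-vertex weight
  set F : V → ℝ := fun u => ((vote pref u (Nt u) (Mt u) : ℤ) : ℝ) with hF
  -- per-vertex identity: F u = [u prefers N] − [u prefers M]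
  have hFval : ∀ u, F u =
      (if PrefersM pref N M u then (1:ℝ) else 0) -
      (if PrefersM pref M N u then (1:ℝ) else 0) := by
    intro u
    rcases hn : N u with _ | v <;> rcases hm : M u with _ | w
    · simp [hF, hNtdef, hMt, hn, hm, PrefersM, vote]
    · have hw := hMne u w hm
      simp [hF, hNtdef, hMt, hn, hm, PrefersM, vote, hw, hw.symm]
    · have hv := hNne u v hn
      simp [hF, hNtdef, hMt, hn, hm, PrefersM, vote, hv, hv.symm]
    · have hv := hNne u v hn
      have hw := hMne u w hm
      by_cases hvw : v = w
      · subst hvw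
        simp [hF, hNtdef, hMt, hn, hm, PrefersM, vote, hpirr]
      · have hadjv := (hN u v hn).1
        have hadjw := (hM u w hm).1
        by_cases hp : pref u v w = true
        · have := hasym u v w hp
          simp [hF, hNtdef, hMt, hn, hm, PrefersM, vote, hvw, hv, hw, hp, this]
        · have hp' : pref u w v = true := by
            rcases htot u v w hadjv hadjw hvw with h | h
            · exact absurd h hp
            · exact h
          simp [hF, hNtdef, hMt, hn, hm, PrefersM, vote, hvw, hv, hw, hp, hp']
  -- pairwise bound
  have hpair : ∀ u, F u + F (Nt u) ≤ α u + α (Nt u) := by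
    intro u
    rcases hn : N u with _ | v
    · have hNu : Nt u = u := by simp [hNtdef, hn]
      rw [hNu]
      have hFu : F u = ((wtSelf M u : ℤ) : ℝ) := by
        rcases hm : M u with _ | w
        · simp [hF, hNtdef, hMt, hn, hm, vote, wtSelf]
        · have hw := hMne u w hm
          simp [hF, hNtdef, hMt, hn, hm, vote, wtSelf, hw, hw.symm]
      rw [hFu]
      have := hself u
      linarith
    · have hNu : Nt u = v := by simp [hNtdef, hn]
      have hNv : Nt v = u := by simp [hNtdef, (hN u v hn).2]
      rw [hNu]
      have : F u + F v = ((wtEdge pref M u v : ℤ) : ℝ) := by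
        simp [hF, hNu, hNv, wtEdge, hMt]
      rw [this]
      exact hedge u v (hN u v hn).1
  -- sum bound via the involution
  have hsumF : ∑ u : V, F u ≤ 0 := by
    have hreidx : ∑ u : V, F (Nt u) = ∑ u : V, F u :=
      Function.Bijective.sum_comp hNinv.bijective F
    have hreidxα : ∑ u : V, α (Nt u) = ∑ u : V, α u :=
      Function.Bijective.sum_comp hNinv.bijective α
    have h1 : ∑ u : V, (F u + F (Nt u)) ≤ ∑ u : V, (α u + α (Nt u)) :=
      Finset.sum_le_sum fun u _ => hpair u
    rw [Finset.sum_add_distrib, Finset.sum_add_distrib, hreidx, hreidxα, hsum] at h1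
    linarith
  -- convert to the counting statement
  have hcount : ((phiM pref N M : ℝ)) - (phiM pref M N : ℝ) ≤ 0 := by
    have h1 : ∑ u : V, (if PrefersM pref N M u then (1:ℝ) else 0) = (phiM pref N M : ℝ) := by
      rw [phiM, Finset.sum_boole]
    have h2 : ∑ u : V, (if PrefersM pref M N u then (1:ℝ) else 0) = (phiM pref M N : ℝ) := by
      rw [phiM, Finset.sum_boole]
    calc ((phiM pref N M : ℝ)) - (phiM pref M N : ℝ)
        = ∑ u : V, ((if PrefersM pref N M u then (1:ℝ) else 0) -
            (if PrefersM pref M N u then (1:ℝ) else 0)) := by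
          rw [Finset.sum_sub_distrib, h1, h2]
      _ = ∑ u : V, F u := by
          exact Finset.sum_congr rfl fun u _ => (hFval u).symm
      _ ≤ 0 := hsumF
  have : (phiM pref N M : ℝ) ≤ (phiM pref M N : ℝ) := by linarith
  exact_mod_cast this
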